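/- Let Z ~ N(0,1). Then lim_{z→+∞} E[(Z − E(Z | Z > z))³ | Z > z] / Var(Z | Z > z)^{3/2} = 2. -/

import Mathlib

open Real MeasureTheory Filter

/-- standard normal density -/
noncomputable def stdPhi (t : ℝ) : ℝ := (Real.sqrt (2 * Real.pi))⁻¹ * Real.exp (-t ^ 2 / 2)

/-- standard normal cumulative distribution function -/
noncomputable def stdCDF (x : ℝ) : ℝ := ∫ t in Set.Iic x, stdPhi t

/-- mean of the standard normal truncated below at `z` -/
noncomputable def truncMean (z : ℝ) : ℝ :=
  ∫ t in Set.Ioi z, t * (stdPhi t / (1 - stdCDF z))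

/-- variance of the standard normal truncated below at `z` -/
noncomputable def truncVar (z : ℝ) : ℝ :=
  ∫ t in Set.Ioi z, (t - truncMean z) ^ 2 * (stdPhi t / (1 - stdCDF z))



noncomputable def myK (z s : ℝ) : ℝ := Real.exp (-s - s ^ 2 / (2 * z ^ 2))

noncomputable def gk (k : ℕ) (z : ℝ) : ℝ := ∫ s in Set.Ioi (0:ℝ), s ^ k * myK z s

lemma integrable_pow_exp (k : ℕ) :
    IntegrableOn (fun s : ℝ => s ^ k * Real.exp (-s)) (Set.Ioi 0) := by
  have h := Real.GammaIntegral_convergent (s := (k + 1 : ℝ)) (by positivity)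
  refine h.congr_fun (fun x hx => ?_) measurableSet_Ioi
  rw [add_sub_cancel_right]; beta_reduce; rw [Real.rpow_natCast]
  ring

lemma integral_pow_exp (k : ℕ) :
    ∫ s in Set.Ioi (0:ℝ), s ^ k * Real.exp (-s) = (Nat.factorial k : ℝ) := by
  have h := Real.Gamma_eq_integral (s := (k + 1 : ℝ)) (by positivity)
  rw [Real.Gamma_nat_eq_factorial] at h
  rw [h]
  refine setIntegral_congr_fun measurableSet_Ioi (fun x hx => ?_)
  rw [add_sub_cancel_right, Real.rpow_natCast]
  ring

lemma K_le (z s : ℝ) (hs : 0 ≤ s) : myK z s ≤ Real.exp (-s) := by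
  apply Real.exp_le_exp.2
  have : 0 ≤ s ^ 2 / (2 * z ^ 2) := by positivity
  linarith

lemma K_pos (z s : ℝ) : 0 < myK z s := Real.exp_pos _

lemma integrable_gk (k : ℕ) (z : ℝ) :
    IntegrableOn (fun s : ℝ => s ^ k * myK z s) (Set.Ioi 0) := by
  refine Integrable.mono' (integrable_pow_exp k) ?_ ?_
  · apply Continuous.aestronglyMeasurable
    unfold myK; fun_prop
  · filter_upwards [ae_restrict_mem measurableSet_Ioi] with s hs
    have hs' : (0:ℝ) ≤ s := le_of_lt hs
    rw [Real.norm_eq_abs, abs_of_nonneg (mul_nonneg (pow_nonneg hs' k) (K_pos z s).le)]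
    exact mul_le_mul_of_nonneg_left (K_le z s hs') (pow_nonneg hs' k)

lemma tendsto_gk (k : ℕ) : Tendsto (gk k) atTop (nhds (Nat.factorial k : ℝ)) := by
  rw [← integral_pow_exp k]
  apply tendsto_integral_filter_of_dominated_convergence
    (bound := fun s : ℝ => s ^ k * Real.exp (-s))
  · filter_upwards with z
    apply Continuous.aestronglyMeasurable
    unfold myK; fun_prop
  · filter_upwards with z
    filter_upwards [ae_restrict_mem measurableSet_Ioi] with s hs
    rw [Real.norm_eq_abs,
      abs_of_nonneg (mul_nonneg (pow_nonneg hs.le k) (K_pos z s).le)]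
    exact mul_le_mul_of_nonneg_left (K_le z s hs.le) (pow_nonneg hs.le k)
  · exact integrable_pow_exp k
  · filter_upwards [ae_restrict_mem measurableSet_Ioi] with s _
    apply Tendsto.const_mul
    unfold myK
    apply Real.continuous_exp.continuousAt.tendsto.comp
    have h1 : Tendsto (fun z : ℝ => s ^ 2 / (2 * z ^ 2)) atTop (nhds 0) := by
      apply Tendsto.div_atTop tendsto_const_nhds
      exact Tendsto.const_mul_atTop (by norm_num) (tendsto_pow_atTop (by norm_num))
    have := h1.const_sub (-s)
    simpa [sub_eq_add_neg] using (tendsto_const_nhds (x := -s) (f := atTop)).sub h1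


lemma stdPhi_pos (t : ℝ) : 0 < stdPhi t :=
  mul_pos (inv_pos.2 (Real.sqrt_pos.2 (by positivity))) (Real.exp_pos _)

lemma integrable_stdPhi : Integrable stdPhi := by
  have h := (integrable_exp_neg_mul_sq (by norm_num : (0:ℝ) < 1/2)).const_mul
    ((Real.sqrt (2 * Real.pi))⁻¹)
  refine h.congr (ae_of_all _ fun t => ?_)
  unfold stdPhi; ring_nf

lemma integral_stdPhi : ∫ t, stdPhi t = 1 := by
  have h1 : ∫ t, stdPhi t = (Real.sqrt (2 * Real.pi))⁻¹ * ∫ t : ℝ, Real.exp (-(1/2) * t ^ 2) := by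
    rw [← integral_const_mul]
    congr 1; ext t; unfold stdPhi; ring_nf
  rw [h1, integral_gaussian]
  have : Real.pi / (1/2) = 2 * Real.pi := by ring
  rw [this, inv_mul_cancel₀ (Real.sqrt_ne_zero'.2 (by positivity))]

lemma one_sub_stdCDF (z : ℝ) : 1 - stdCDF z = ∫ t in Set.Ioi z, stdPhi t := by
  have h := intervalIntegral.integral_Iic_add_Ioi (b := z) (f := stdPhi) (μ := volume)
    integrable_stdPhi.integrableOn integrable_stdPhi.integrableOn
  rw [integral_stdPhi] at h
  unfold stdCDF; linarith

lemma integral_shift (z : ℝ) (f : ℝ → ℝ) :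
    ∫ t in Set.Ioi z, f t = ∫ s in Set.Ioi (0:ℝ), f (s + z) := by
  rw [← integral_indicator measurableSet_Ioi, ← integral_indicator measurableSet_Ioi,
    ← integral_add_right_eq_self (fun x => (Set.Ioi z).indicator f x) z]
  congr 1; ext s
  simp [Set.indicator_apply, Set.mem_Ioi, lt_add_iff_pos_left]

lemma stdPhi_shift {z : ℝ} (hz : 0 < z) (u : ℝ) :
    stdPhi (z + u / z) = stdPhi z * myK z u := by
  unfold stdPhi myK
  have h : -(z + u / z) ^ 2 / 2 = -z ^ 2 / 2 + (-u - u ^ 2 / (2 * z ^ 2)) := by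
    field_simp; ring
  rw [h, Real.exp_add]; ring

lemma cov (f : ℝ → ℝ) {z : ℝ} (hz : 0 < z) :
    ∫ t in Set.Ioi z, f t * stdPhi t
      = stdPhi z / z * ∫ s in Set.Ioi (0:ℝ), f (z + s / z) * myK z s := by
  rw [integral_shift]
  have h := integral_comp_mul_left_Ioi (fun s => f (s + z) * stdPhi (s + z)) 0
    (inv_pos.2 hz)
  simp only [mul_zero, inv_inv, smul_eq_mul] at h
  have h2 : ∫ s in Set.Ioi (0:ℝ), f (s + z) * stdPhi (s + z)
      = z⁻¹ * ∫ u in Set.Ioi (0:ℝ), f (z⁻¹ * u + z) * stdPhi (z⁻¹ * u + z) := by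
    rw [h, ← mul_assoc, inv_mul_cancel₀ hz.ne', one_mul]
  rw [h2]
  have h3 : ∀ u ∈ Set.Ioi (0:ℝ), f (z⁻¹ * u + z) * stdPhi (z⁻¹ * u + z)
      = stdPhi z * (f (z + u / z) * myK z u) := by
    intro u _
    have hu : z⁻¹ * u + z = z + u / z := by field_simp; ring
    rw [hu, stdPhi_shift hz u]; ring
  rw [setIntegral_congr_fun measurableSet_Ioi h3, integral_const_mul]
  ring

noncomputable def mr (z : ℝ) : ℝ := gk 1 z / gk 0 z
noncomputable def B2 (z : ℝ) : ℝ := ∫ s in Set.Ioi (0:ℝ), (s - mr z) ^ 2 * myK z s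
noncomputable def B3 (z : ℝ) : ℝ := ∫ s in Set.Ioi (0:ℝ), (s - mr z) ^ 3 * myK z s


lemma lin_int (z a b : ℝ) : ∫ s in Set.Ioi (0:ℝ), (a + b * s) * myK z s
    = a * gk 0 z + b * gk 1 z := by
  have h : ∀ s : ℝ, (a + b * s) * myK z s
      = a * (s ^ 0 * myK z s) + b * (s ^ 1 * myK z s) := fun s => by ring
  simp_rw [h]
  rw [integral_add ((integrable_gk 0 z).const_mul a) ((integrable_gk 1 z).const_mul b),
    integral_const_mul, integral_const_mul]
  rfl

lemma quad_int (z c : ℝ) : ∫ s in Set.Ioi (0:ℝ), (s - c) ^ 2 * myK z s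
    = gk 2 z - 2 * c * gk 1 z + c ^ 2 * gk 0 z := by
  have h : ∀ s : ℝ, (s - c) ^ 2 * myK z s
      = s ^ 2 * myK z s - 2 * c * (s ^ 1 * myK z s) + c ^ 2 * (s ^ 0 * myK z s) :=
    fun s => by ring
  simp_rw [h]
  have hAB : IntegrableOn (fun s : ℝ => s ^ 2 * myK z s - 2 * c * (s ^ 1 * myK z s))
      (Set.Ioi 0) := (integrable_gk 2 z).sub ((integrable_gk 1 z).const_mul (2 * c))
  have hC : IntegrableOn (fun s : ℝ => c ^ 2 * (s ^ 0 * myK z s)) (Set.Ioi 0) :=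
    (integrable_gk 0 z).const_mul (c ^ 2)
  rw [integral_add hAB hC,
    integral_sub (integrable_gk 2 z) ((integrable_gk 1 z).const_mul (2 * c)),
    integral_const_mul, integral_const_mul]
  rfl

lemma cube_int (z c : ℝ) : ∫ s in Set.Ioi (0:ℝ), (s - c) ^ 3 * myK z s
    = gk 3 z - 3 * c * gk 2 z + 3 * c ^ 2 * gk 1 z - c ^ 3 * gk 0 z := by
  have h : ∀ s : ℝ, (s - c) ^ 3 * myK z s
      = s ^ 3 * myK z s - 3 * c * (s ^ 2 * myK z s) + 3 * c ^ 2 * (s ^ 1 * myK z s)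
        - c ^ 3 * (s ^ 0 * myK z s) := fun s => by ring
  simp_rw [h]
  have hAB : IntegrableOn (fun s : ℝ => s ^ 3 * myK z s - 3 * c * (s ^ 2 * myK z s))
      (Set.Ioi 0) := (integrable_gk 3 z).sub ((integrable_gk 2 z).const_mul (3 * c))
  have hABC : IntegrableOn
      (fun s : ℝ => s ^ 3 * myK z s - 3 * c * (s ^ 2 * myK z s) + 3 * c ^ 2 * (s ^ 1 * myK z s))
      (Set.Ioi 0) := hAB.add ((integrable_gk 1 z).const_mul (3 * c ^ 2))
  have hD : IntegrableOn (fun s : ℝ => c ^ 3 * (s ^ 0 * myK z s)) (Set.Ioi 0) :=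
    (integrable_gk 0 z).const_mul (c ^ 3)
  rw [integral_sub hABC hD, integral_add hAB ((integrable_gk 1 z).const_mul (3 * c ^ 2)),
    integral_sub (integrable_gk 3 z) ((integrable_gk 2 z).const_mul (3 * c)),
    integral_const_mul, integral_const_mul, integral_const_mul]
  rfl

lemma Q_eq {z : ℝ} (hz : 0 < z) : 1 - stdCDF z = stdPhi z / z * gk 0 z := by
  rw [one_sub_stdCDF]
  have h := cov (fun _ => (1:ℝ)) hz
  simpa [gk] using h

lemma mean_eq {z : ℝ} (hz : 0 < z) (hg0 : 0 < gk 0 z) :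
    truncMean z = z + mr z / z := by
  have hQ := Q_eq hz
  have hQpos : 0 < 1 - stdCDF z := by
    rw [hQ]; exact mul_pos (div_pos (stdPhi_pos z) hz) hg0
  unfold truncMean
  have h1 : ∀ t ∈ Set.Ioi z, t * (stdPhi t / (1 - stdCDF z))
      = (t * stdPhi t) / (1 - stdCDF z) := fun t _ => by ring
  rw [setIntegral_congr_fun measurableSet_Ioi h1, integral_div, cov (fun t => t) hz]
  have h2 : ∀ s ∈ Set.Ioi (0:ℝ), (z + s / z) * myK z s = (z + z⁻¹ * s) * myK z s :=
    fun s _ => by ring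
  rw [setIntegral_congr_fun measurableSet_Ioi h2, lin_int, hQ]
  unfold mr
  field_simp [hz.ne', hg0.ne', (stdPhi_pos z).ne']



lemma var_eq {z : ℝ} (hz : 0 < z) (hg0 : 0 < gk 0 z) :
    truncVar z = B2 z / (z ^ 2 * gk 0 z) := by
  have hQ := Q_eq hz
  unfold truncVar
  have h1 : ∀ t ∈ Set.Ioi z, (t - truncMean z) ^ 2 * (stdPhi t / (1 - stdCDF z))
      = ((t - truncMean z) ^ 2 * stdPhi t) / (1 - stdCDF z) := fun t _ => by ring
  rw [setIntegral_congr_fun measurableSet_Ioi h1, integral_div,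
    cov (fun t => (t - truncMean z) ^ 2) hz]
  have hm := mean_eq hz hg0
  have h2 : ∀ s ∈ Set.Ioi (0:ℝ), (z + s / z - truncMean z) ^ 2 * myK z s
      = z⁻¹ ^ 2 * ((s - mr z) ^ 2 * myK z s) := by
    intro s _
    rw [hm]
    field_simp
    ring
  rw [setIntegral_congr_fun measurableSet_Ioi h2, integral_const_mul]
  have hB2 : ∫ s in Set.Ioi (0:ℝ), (s - mr z) ^ 2 * myK z s = B2 z := rfl
  rw [hB2, hQ]
  field_simp [hz.ne', hg0.ne', (stdPhi_pos z).ne']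

lemma num_eq {z : ℝ} (hz : 0 < z) (hg0 : 0 < gk 0 z) :
    (∫ t in Set.Ioi z, (t - truncMean z) ^ 3 * (stdPhi t / (1 - stdCDF z)))
      = B3 z / (z ^ 3 * gk 0 z) := by
  have hQ := Q_eq hz
  have h1 : ∀ t ∈ Set.Ioi z, (t - truncMean z) ^ 3 * (stdPhi t / (1 - stdCDF z))
      = ((t - truncMean z) ^ 3 * stdPhi t) / (1 - stdCDF z) := fun t _ => by ring
  rw [setIntegral_congr_fun measurableSet_Ioi h1, integral_div,
    cov (fun t => (t - truncMean z) ^ 3) hz]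
  have hm := mean_eq hz hg0
  have h2 : ∀ s ∈ Set.Ioi (0:ℝ), (z + s / z - truncMean z) ^ 3 * myK z s
      = z⁻¹ ^ 3 * ((s - mr z) ^ 3 * myK z s) := by
    intro s _
    rw [hm]
    field_simp
    ring
  rw [setIntegral_congr_fun measurableSet_Ioi h2, integral_const_mul]
  have hB3 : ∫ s in Set.Ioi (0:ℝ), (s - mr z) ^ 3 * myK z s = B3 z := rfl
  rw [hB3, hQ]
  field_simp [hz.ne', hg0.ne', (stdPhi_pos z).ne']

lemma main_eq {z : ℝ} (hz : 0 < z) (hg0 : 0 < gk 0 z) :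
    (∫ t in Set.Ioi z, (t - truncMean z) ^ 3 * (stdPhi t / (1 - stdCDF z))) /
        truncVar z ^ ((3:ℝ)/2)
      = (B3 z / gk 0 z) / (B2 z / gk 0 z) ^ ((3:ℝ)/2) := by
  rw [num_eq hz hg0, var_eq hz hg0]
  have hB2 : 0 ≤ B2 z := setIntegral_nonneg measurableSet_Ioi
    (fun s _ => mul_nonneg (sq_nonneg _) (K_pos z s).le)
  have hz23 : (z ^ 2 : ℝ) ^ ((3:ℝ)/2) = z ^ 3 := by
    rw [← Real.rpow_natCast z 2, ← Real.rpow_natCast z 3, ← Real.rpow_mul hz.le]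
    norm_num
  by_cases hb : B2 z = 0
  · simp [hb, Real.zero_rpow (by norm_num : ((3:ℝ)/2) ≠ 0)]
  · have hb' : 0 < B2 z := lt_of_le_of_ne hB2 (Ne.symm hb)
    rw [Real.div_rpow hB2 (mul_nonneg (by positivity) hg0.le),
      Real.div_rpow hB2 hg0.le, Real.mul_rpow (by positivity) hg0.le, hz23]
    have h1 : (0:ℝ) < B2 z ^ ((3:ℝ)/2) := Real.rpow_pos_of_pos hb' _
    have h2 : (0:ℝ) < gk 0 z ^ ((3:ℝ)/2) := Real.rpow_pos_of_pos hg0 _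
    field_simp

lemma tendsto_mr : Tendsto mr atTop (nhds 1) := by
  have h := (tendsto_gk 1).div (tendsto_gk 0) (by norm_num [Nat.factorial])
  norm_num [Nat.factorial] at h; exact h

lemma tendsto_B2 : Tendsto B2 atTop (nhds 1) := by
  have h := ((tendsto_gk 2).sub ((tendsto_mr.const_mul 2).mul (tendsto_gk 1))).add
    ((tendsto_mr.pow 2).mul (tendsto_gk 0))
  have h2 : Tendsto B2 atTop
      (nhds ((Nat.factorial 2 : ℝ) - 2 * 1 * (Nat.factorial 1 : ℝ)
        + 1 ^ 2 * (Nat.factorial 0 : ℝ))) := by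
    refine h.congr (fun z => ?_)
    unfold B2
    rw [quad_int z (mr z)]
  norm_num [Nat.factorial] at h2
  exact h2

lemma tendsto_B3 : Tendsto B3 atTop (nhds 2) := by
  have h := (((tendsto_gk 3).sub ((tendsto_mr.const_mul 3).mul (tendsto_gk 2))).add
    (((tendsto_mr.pow 2).const_mul 3).mul (tendsto_gk 1))).sub
    ((tendsto_mr.pow 3).mul (tendsto_gk 0))
  have h2 : Tendsto B3 atTop
      (nhds ((Nat.factorial 3 : ℝ) - 3 * 1 * (Nat.factorial 2 : ℝ)
        + 3 * 1 ^ 2 * (Nat.factorial 1 : ℝ) - 1 ^ 3 * (Nat.factorial 0 : ℝ))) := by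
    refine h.congr (fun z => ?_)
    unfold B3
    rw [cube_int z (mr z)]
  norm_num [Nat.factorial] at h2
  exact h2

/-- The skewness of the standard normal truncated below at `z` tends to `2`
(the skewness of the exponential distribution) as `z → ∞`. -/
theorem stmt_16 :
    Tendsto
      (fun z =>
        (∫ t in Set.Ioi z, (t - truncMean z) ^ 3 * (stdPhi t / (1 - stdCDF z))) /
          (truncVar z) ^ ((3 : ℝ) / 2))
      atTop (nhds 2) := by
  have hfin : Tendsto (fun z => (B3 z / gk 0 z) / (B2 z / gk 0 z) ^ ((3:ℝ)/2))
      atTop (nhds 2) := by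
    have h3 : Tendsto (fun z => B3 z / gk 0 z) atTop (nhds 2) := by
      have := tendsto_B3.div (tendsto_gk 0) (by norm_num [Nat.factorial])
      norm_num [Nat.factorial] at this; exact this
    have h2 : Tendsto (fun z => B2 z / gk 0 z) atTop (nhds 1) := by
      have := tendsto_B2.div (tendsto_gk 0) (by norm_num [Nat.factorial])
      norm_num [Nat.factorial] at this; exact this
    have h2' : Tendsto (fun z => (B2 z / gk 0 z) ^ ((3:ℝ)/2)) atTop (nhds 1) := by
      have := Tendsto.rpow_const (p := (3:ℝ)/2) h2 (Or.inl one_ne_zero)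
      simpa using this
    have := h3.div h2' one_ne_zero
    norm_num at this; exact this
  refine Tendsto.congr' ?_ hfin
  have h1 : ∀ᶠ z : ℝ in atTop, 0 < z := eventually_gt_atTop 0
  have h2 : ∀ᶠ z : ℝ in atTop, 0 < gk 0 z :=
    (tendsto_gk 0).eventually (eventually_gt_nhds (by norm_num [Nat.factorial]))
  filter_upwards [h1, h2] with z hz hg0
  exact (main_eq hz hg0).symm
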